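/- Let h ∈ (0,1), λ₁ = 2(1−h), λ₂ = 2(1+h), let ρ ∈ (0, π/2) and let ρ̃ ∈ (−π/2, 0) satisfy tan ρ̃ = −1/(h·tan ρ). Set v₁ = (2π/(√λ₂·sin ρ), 0), v₂ = (−2π/(√λ₁·tan ρ), 2π/√λ₁), A = sin ρ̃ / sin ρ and B = −√(λ₂/λ₁)·A·(1 + h·tan²ρ)·cos ρ. Then a vector (T, V) ∈ ℝ² satisfies the three conditions √λ₁·V ∈ 2πℤ, √λ₂·(T·sin ρ + V·cos ρ) ∈ 2πℤ, and √λ₂·(T·sin ρ̃ + V·cos ρ̃) ∈ 2πℤ, if and only if there exist integers n and m with (T, V) = n·v₁ + m·v₂ and n·A + m·B ∈ ℤ. -/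

import Mathlib

open Real

/-- description of the period lattice: `(T, V)` satisfies the
three congruence conditions iff `(T, V) = n·v₁ + m·v₂` for integers `n, m`
with `n·A + m·B ∈ ℤ`. -/
theorem stmt15 (h : ℝ) (hh : h ∈ Set.Ioo (0 : ℝ) 1)
    (ρ ρ' : ℝ) (hρ : ρ ∈ Set.Ioo 0 (π / 2)) (hρ' : ρ' ∈ Set.Ioo (-(π / 2)) 0)
    (htan : Real.tan ρ' = -1 / (h * Real.tan ρ))
    (lam₁ lam₂ : ℝ) (hlam₁ : lam₁ = 2 * (1 - h)) (hlam₂ : lam₂ = 2 * (1 + h))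
    (v₁ v₂ : ℝ × ℝ)
    (hv₁ : v₁ = (2 * π / (Real.sqrt lam₂ * Real.sin ρ), 0))
    (hv₂ : v₂ = (-(2 * π) / (Real.sqrt lam₁ * Real.tan ρ), 2 * π / Real.sqrt lam₁))
    (A B : ℝ)
    (hA : A = Real.sin ρ' / Real.sin ρ)
    (hB : B = -Real.sqrt (lam₂ / lam₁) * A * (1 + h * (Real.tan ρ) ^ 2) * Real.cos ρ)
    (T V : ℝ) :
    ((∃ m : ℤ, Real.sqrt lam₁ * V = 2 * π * m) ∧
     (∃ n : ℤ, Real.sqrt lam₂ * (T * Real.sin ρ + V * Real.cos ρ) = 2 * π * n) ∧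
     (∃ k : ℤ, Real.sqrt lam₂ * (T * Real.sin ρ' + V * Real.cos ρ') = 2 * π * k)) ↔
    (∃ n m : ℤ, (T, V) = (n : ℝ) • v₁ + (m : ℝ) • v₂ ∧
      ∃ k : ℤ, (n : ℝ) * A + (m : ℝ) * B = (k : ℝ)) := by
  obtain ⟨hh0, hh1⟩ := hh
  obtain ⟨hρ0, hρπ⟩ := hρ
  obtain ⟨hρ'0, hρ'1⟩ := hρ'
  have hπ : (0:ℝ) < π := Real.pi_pos
  have hl1 : (0:ℝ) < lam₁ := by rw [hlam₁]; linarith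
  have hl2 : (0:ℝ) < lam₂ := by rw [hlam₂]; linarith
  have hs1 : (0:ℝ) < Real.sqrt lam₁ := Real.sqrt_pos.mpr hl1
  have hs2 : (0:ℝ) < Real.sqrt lam₂ := Real.sqrt_pos.mpr hl2
  have hsin : 0 < Real.sin ρ := Real.sin_pos_of_pos_of_lt_pi hρ0 (by linarith)
  have hcos : 0 < Real.cos ρ := Real.cos_pos_of_mem_Ioo ⟨by linarith, hρπ⟩
  have hcos' : 0 < Real.cos ρ' := Real.cos_pos_of_mem_Ioo ⟨hρ'0, by linarith⟩
  have hsin0 := hsin.ne'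
  have hcos0 := hcos.ne'
  have hcos'0 := hcos'.ne'
  have hs10 := hs1.ne'
  have hs20 := hs2.ne'
  have hh0' := hh0.ne'
  have htanρ : Real.tan ρ = Real.sin ρ / Real.cos ρ := Real.tan_eq_sin_div_cos ρ
  have htan0 : Real.tan ρ ≠ 0 := by rw [htanρ]; positivity
  have hsqdiv : Real.sqrt (lam₂ / lam₁) = Real.sqrt lam₂ / Real.sqrt lam₁ :=
    Real.sqrt_div hl2.le lam₁
  -- key relation: cos ρ * cos ρ' = - h * sin ρ * sin ρ'
  have key : Real.cos ρ * Real.cos ρ' = -(h * Real.sin ρ * Real.sin ρ') := by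
    have h1 : Real.tan ρ' = Real.sin ρ' / Real.cos ρ' := Real.tan_eq_sin_div_cos ρ'
    rw [h1, htanρ] at htan
    field_simp at htan
    linarith
  -- alternative expression for B
  have hB2 : B = (Real.sqrt lam₂ / Real.sqrt lam₁) *
      (Real.cos ρ' - Real.sin ρ' * Real.cos ρ / Real.sin ρ) := by
    rw [hB, hA, hsqdiv, htanρ]
    field_simp
    linear_combination (-(Real.sin ρ)) * key
  -- central identity
  have central : ∀ n m : ℝ,
      Real.sqrt lam₂ * ((n * (2 * π / (Real.sqrt lam₂ * Real.sin ρ)) +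
        m * (-(2 * π) / (Real.sqrt lam₁ * Real.tan ρ))) * Real.sin ρ' +
        (m * (2 * π / Real.sqrt lam₁)) * Real.cos ρ') = 2 * π * (n * A + m * B) := by
    intro n m
    rw [hA, hB2, htanρ]
    field_simp
    ring
  constructor
  · rintro ⟨⟨m, hm⟩, ⟨n, hn⟩, ⟨k, hk⟩⟩
    have hVeq : V = m * (2 * π / Real.sqrt lam₁) := by
      rw [mul_div_assoc', eq_div_iff hs10]
      linear_combination hm
    have hTd : T = (2 * π * n * Real.sqrt lam₁ - 2 * π * m * Real.sqrt lam₂ * Real.cos ρ) /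
        (Real.sqrt lam₂ * Real.sqrt lam₁ * Real.sin ρ) := by
      rw [eq_div_iff (by positivity)]
      linear_combination Real.sqrt lam₁ * hn - Real.sqrt lam₂ * Real.cos ρ * hm
    have hTeq : T = n * (2 * π / (Real.sqrt lam₂ * Real.sin ρ)) +
        m * (-(2 * π) / (Real.sqrt lam₁ * Real.tan ρ)) := by
      rw [hTd, htanρ]
      field_simp
      ring
    refine ⟨n, m, ?_, k, ?_⟩
    · rw [hv₁, hv₂, Prod.ext_iff]
      refine ⟨?_, ?_⟩
      · simpa using hTeq
      · simpa using hVeq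
    · have hc := central n m
      rw [← hTeq, ← hVeq, hk] at hc
      have h2π : (2:ℝ) * π ≠ 0 := by positivity
      exact (mul_left_cancel₀ h2π hc).symm
  · rintro ⟨n, m, hTV, k, hk⟩
    rw [hv₁, hv₂, Prod.ext_iff] at hTV
    simp only [Prod.smul_fst, Prod.smul_snd, Prod.fst_add, Prod.snd_add, smul_eq_mul] at hTV
    obtain ⟨hT, hV⟩ := hTV
    have hV' : V = m * (2 * π / Real.sqrt lam₁) := by rw [hV]; ring
    have hT' : T = n * (2 * π / (Real.sqrt lam₂ * Real.sin ρ)) +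
        m * (-(2 * π) / (Real.sqrt lam₁ * Real.tan ρ)) := hT
    refine ⟨⟨m, ?_⟩, ⟨n, ?_⟩, ⟨k, ?_⟩⟩
    · rw [hV']; field_simp
    · rw [hT', hV', htanρ]
      field_simp
      ring
    · have hc := central n m
      rw [← hT', ← hV', hk] at hc
      exact hc
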